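/- Let ζ ∈ ℂ with |ζ| = 1, let r ≥ 0 and let θ ∈ ℝ with |θ| ≤ π. Then (i) |ζ + e^{ζ r e^{iθ}} − 1| ≤ e^r; and (ii) there exists an absolute constant c > 0 such that if moreover 0 ≤ r ≤ 1, then |ζ + e^{ζ r e^{iθ}} − 1| ≤ e^{r − c r θ²}. -/

import Mathlib

open Real Complex

lemma exp_tail_le (z : ℂ) (k : ℕ) :
    ‖Complex.exp z - ∑ i ∈ Finset.range k, z ^ i / i.factorial‖ ≤
      Real.exp (‖z‖) - ∑ i ∈ Finset.range k, (‖z‖) ^ i / i.factorial := by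
  have hsC : Summable (fun n : ℕ => z ^ n / (n.factorial : ℂ)) :=
    NormedSpace.expSeries_div_summable z
  have hsR : Summable (fun n : ℕ => (‖z‖) ^ n / (n.factorial : ℝ)) :=
    NormedSpace.expSeries_div_summable (‖z‖)
  have hC : Complex.exp z = ∑' n : ℕ, z ^ n / (n.factorial : ℂ) := by
    rw [Complex.exp_eq_exp_ℂ, NormedSpace.exp_eq_tsum_div]
  have hR : Real.exp (‖z‖) = ∑' n : ℕ, (‖z‖) ^ n / (n.factorial : ℝ) := by
    rw [Real.exp_eq_exp_ℝ, NormedSpace.exp_eq_tsum_div]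
  have eC : Complex.exp z - ∑ i ∈ Finset.range k, z ^ i / i.factorial
      = ∑' n : ℕ, z ^ (n + k) / ((n + k).factorial : ℂ) := by
    rw [hC, ← Summable.sum_add_tsum_nat_add k hsC]; ring
  have eR : Real.exp (‖z‖) - ∑ i ∈ Finset.range k, (‖z‖) ^ i / i.factorial
      = ∑' n : ℕ, (‖z‖) ^ (n + k) / ((n + k).factorial : ℝ) := by
    rw [hR, ← Summable.sum_add_tsum_nat_add k hsR]; ring
  rw [eC, eR]
  have hnorm : ∀ n : ℕ, ‖z ^ (n + k) / ((n + k).factorial : ℂ)‖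
      = (‖z‖) ^ (n + k) / ((n + k).factorial : ℝ) := by
    intro n
    simp [norm_div, norm_pow]
  calc ‖∑' n : ℕ, z ^ (n + k) / ((n + k).factorial : ℂ)‖
      ≤ ∑' n : ℕ, ‖z ^ (n + k) / ((n + k).factorial : ℂ)‖ := by
        exact norm_tsum_le_tsum_norm (by simpa [hnorm, Function.comp_def] using (hsR.comp_injective (add_left_injective k)))
    _ = ∑' n : ℕ, (‖z‖) ^ (n + k) / ((n + k).factorial : ℝ) := tsum_congr hnorm

theorem abs_zeta_add_exp_sub_one_le :
    ∃ c : ℝ, 0 < c ∧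
      ∀ (ζ : ℂ) (r θ : ℝ), ‖ζ‖ = 1 → 0 ≤ r → |θ| ≤ π →
        ‖ζ + Complex.exp (ζ * (r : ℂ) * Complex.exp ((θ : ℂ) * Complex.I)) - 1‖
            ≤ Real.exp r
        ∧ (r ≤ 1 →
            ‖ζ + Complex.exp (ζ * (r : ℂ) * Complex.exp ((θ : ℂ) * Complex.I)) - 1‖
              ≤ Real.exp (r - c * r * θ ^ 2)) := by
  refine ⟨1/30, by norm_num, fun ζ r θ hζ hr hθ => ?_⟩
  set w : ℂ := ζ * (r : ℂ) * Complex.exp ((θ : ℂ) * Complex.I) with hw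
  have habsw : ‖w‖ = r := by
    simp [hw, norm_mul, hζ, Complex.norm_exp, Complex.norm_real, _root_.abs_of_nonneg hr]
  have tail1 : ‖Complex.exp w - 1‖ ≤ Real.exp r - 1 := by
    have := exp_tail_le w 1
    simpa [habsw, Finset.sum_range_one] using this
  have tail2 : ‖Complex.exp w - 1 - w‖ ≤ Real.exp r - 1 - r := by
    have := exp_tail_le w 2
    simpa [habsw, Finset.sum_range_succ, sub_sub] using this
  constructor
  · calc ‖ζ + Complex.exp w - 1‖ = ‖(Complex.exp w - 1) + ζ‖ := by
          ring_nf
      _ ≤ ‖Complex.exp w - 1‖ + ‖ζ‖ := norm_add_le _ _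
      _ ≤ (Real.exp r - 1) + 1 := by rw [hζ]; linarith [tail1]
      _ = Real.exp r := by ring
  · intro hr1
    set u : ℝ := r * (1 - Real.cos θ) / 2 with hu
    have hcos1 : Real.cos θ ≤ 1 := Real.cos_le_one θ
    have hcos2 : -1 ≤ Real.cos θ := Real.neg_one_le_cos θ
    have hu0 : 0 ≤ u := by
      have : 0 ≤ 1 - Real.cos θ := by linarith
      positivity
    have hur : u ≤ r := by nlinarith
    -- |ζ + w| ≤ 1 + r - u
    have key2 : ‖ζ + w‖ ≤ 1 + r - u := by
      have hfac : ζ + w = ζ * (1 + (r : ℂ) * Complex.exp ((θ : ℂ) * Complex.I)) := by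
        rw [hw]; ring
      have habs : ‖ζ + w‖ = ‖1 + (r : ℂ) * Complex.exp ((θ : ℂ) * Complex.I)‖ := by
        rw [hfac, norm_mul, hζ, one_mul]
      have hform : (1 : ℂ) + (r : ℂ) * Complex.exp ((θ : ℂ) * Complex.I)
          = Complex.mk (1 + r * Real.cos θ) (r * Real.sin θ) := by
        rw [Complex.exp_mul_I]
        apply Complex.ext <;>
          simp [Complex.cos_ofReal_re, Complex.sin_ofReal_re, Complex.cos_ofReal_im,
            Complex.sin_ofReal_im, Complex.add_re, Complex.mul_re, Complex.mul_im]
      have hsq : (‖ζ + w‖) ^ 2 = 1 + 2 * r * Real.cos θ + r ^ 2 := by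
        rw [habs, hform, Complex.sq_norm, Complex.normSq_mk]
        have := Real.sin_sq_add_cos_sq θ
        nlinarith
      have hA : 0 ≤ ‖ζ + w‖ := norm_nonneg _
      have hB : (0:ℝ) ≤ 1 + r - u := by linarith
      have hsq2 : (‖ζ + w‖) ^ 2 ≤ (1 + r - u) ^ 2 := by
        rw [hsq]; nlinarith
      calc ‖ζ + w‖ = Real.sqrt ((‖ζ + w‖) ^ 2) := by
            rw [Real.sqrt_sq hA]
        _ ≤ Real.sqrt ((1 + r - u) ^ 2) := Real.sqrt_le_sqrt hsq2
        _ = 1 + r - u := Real.sqrt_sq hB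
    have step1 : ‖ζ + Complex.exp w - 1‖ ≤ Real.exp r - u := by
      calc ‖ζ + Complex.exp w - 1‖
          = ‖(ζ + w) + (Complex.exp w - 1 - w)‖ := by ring_nf
        _ ≤ ‖ζ + w‖ + ‖Complex.exp w - 1 - w‖ := norm_add_le _ _
        _ ≤ (1 + r - u) + (Real.exp r - 1 - r) := by linarith [key2, tail2]
        _ = Real.exp r - u := by ring
    have hcosq : Real.cos θ ≤ 1 - 2 / π ^ 2 * θ ^ 2 := Real.cos_le_one_sub_mul_cos_sq hθ
    have hpi : π ^ 2 < 10 := by nlinarith [Real.pi_lt_d2, Real.pi_gt_three]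
    have hpipos : (0:ℝ) < π ^ 2 := by positivity
    have h2θ : 2 * θ ^ 2 ≤ (1 - Real.cos θ) * π ^ 2 := by
      have h := mul_le_mul_of_nonneg_right
        (by linarith [hcosq] : 2 / π ^ 2 * θ ^ 2 ≤ 1 - Real.cos θ) hpipos.le
      have he : 2 / π ^ 2 * θ ^ 2 * π ^ 2 = 2 * θ ^ 2 := by field_simp
      linarith
    have hexpr : Real.exp r ≤ 3 := by
      calc Real.exp r ≤ Real.exp 1 := Real.exp_le_exp.2 hr1
        _ ≤ 3 := by linarith [Real.exp_one_lt_d9]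
    have hxu : Real.exp r * (1 / 30 * r * θ ^ 2) ≤ u := by
      rw [hu]
      nlinarith [mul_nonneg (by linarith : (0:ℝ) ≤ 3 - Real.exp r) (mul_nonneg hr (sq_nonneg θ)),
        mul_nonneg (mul_nonneg hr (by linarith : (0:ℝ) ≤ 1 - Real.cos θ))
          (by linarith : (0:ℝ) ≤ 10 - π ^ 2),
        mul_le_mul_of_nonneg_left h2θ hr]
    have final : Real.exp r - u ≤ Real.exp (r - 1 / 30 * r * θ ^ 2) := by
      have h1 : 1 - 1 / 30 * r * θ ^ 2 ≤ Real.exp (-(1 / 30 * r * θ ^ 2)) := by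
        linarith [Real.add_one_le_exp (-(1 / 30 * r * θ ^ 2))]
      have h2 : Real.exp (r - 1 / 30 * r * θ ^ 2)
          = Real.exp r * Real.exp (-(1 / 30 * r * θ ^ 2)) := by
        rw [← Real.exp_add]; ring_nf
      have h3 : Real.exp r * (1 - 1 / 30 * r * θ ^ 2)
          ≤ Real.exp r * Real.exp (-(1 / 30 * r * θ ^ 2)) :=
        mul_le_mul_of_nonneg_left h1 (Real.exp_pos r).le
      have h4 : Real.exp r - Real.exp r * (1 / 30 * r * θ ^ 2)
          = Real.exp r * (1 - 1 / 30 * r * θ ^ 2) := by ring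
      linarith
    calc ‖ζ + Complex.exp w - 1‖ ≤ Real.exp r - u := step1
      _ ≤ Real.exp (r - 1 / 30 * r * θ ^ 2) := final
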